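/- Correctness of BFV relinearization (version 1): let q ≥ 2, T ≥ 2 and l ≥ 0 be integers and work in R = ℤ[x]/(xⁿ+1). Let s, h₀, h₁, h₂ ∈ R, and for τ = 0, …, l let a_τ, e_τ, h₂^{(τ)} ∈ R satisfy b_τ ≡ −(a_τ·s + e_τ) + T^τ·s² (mod q) and h₂ ≡ Σ_{τ=0}^{l} T^τ·h₂^{(τ)} (mod q). Then the relinearized pair h₀' = h₀ + Σ_{τ=0}^{l} b_τ·h₂^{(τ)} and h₁' = h₁ + Σ_{τ=0}^{l} a_τ·h₂^{(τ)} satisfies h₀' + h₁'·s ≡ h₀ + h₁·s + h₂·s² − Σ_{τ=0}^{l} h₂^{(τ)}·e_τ (mod q). -/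

import Mathlib

open Polynomial

/-- Correctness of BFV relinearization (version 1) in `R = ℤ[x]/(xⁿ+1)`
(formalized as `AdjoinRoot (Xⁿ + 1)`): with relinearization keys
`b τ ≡ -(a τ·s + e τ) + T^τ·s² (mod q)` and `h₂ ≡ ∑ T^τ·h₂^{(τ)} (mod q)`,
the relinearized pair `h₀' = h₀ + ∑ b τ·h₂^{(τ)}`, `h₁' = h₁ + ∑ a τ·h₂^{(τ)}`
satisfies `h₀' + h₁'·s ≡ h₀ + h₁·s + h₂·s² - ∑ h₂^{(τ)}·e τ (mod q)`.
Congruence modulo `q` in `R` is divisibility of the difference by `(q : R)`. -/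
theorem bfv_relinearization_v1_correct (n : ℕ) (hn : 1 ≤ n) (q T l : ℕ)
    (hq : 2 ≤ q) (hT : 2 ≤ T)
    (s h₀ h₁ h₂ : AdjoinRoot ((X : Polynomial ℤ) ^ n + 1))
    (a e h₂' b : Fin (l + 1) → AdjoinRoot ((X : Polynomial ℤ) ^ n + 1))
    (hb : ∀ τ, (q : AdjoinRoot ((X : Polynomial ℤ) ^ n + 1)) ∣
      (b τ - (-(a τ * s + e τ)
        + (T : AdjoinRoot ((X : Polynomial ℤ) ^ n + 1)) ^ (τ : ℕ) * s ^ 2)))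
    (hh₂ : (q : AdjoinRoot ((X : Polynomial ℤ) ^ n + 1)) ∣
      (h₂ - ∑ τ : Fin (l + 1), (T : AdjoinRoot ((X : Polynomial ℤ) ^ n + 1)) ^ (τ : ℕ) * h₂' τ)) :
    (q : AdjoinRoot ((X : Polynomial ℤ) ^ n + 1)) ∣
      ((h₀ + ∑ τ : Fin (l + 1), b τ * h₂' τ) + (h₁ + ∑ τ : Fin (l + 1), a τ * h₂' τ) * s
        - (h₀ + h₁ * s + h₂ * s ^ 2 - ∑ τ : Fin (l + 1), h₂' τ * e τ)) := by
  have key : ((h₀ + ∑ τ : Fin (l + 1), b τ * h₂' τ) + (h₁ + ∑ τ : Fin (l + 1), a τ * h₂' τ) * s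
        - (h₀ + h₁ * s + h₂ * s ^ 2 - ∑ τ : Fin (l + 1), h₂' τ * e τ))
      = (∑ τ : Fin (l + 1), (b τ - (-(a τ * s + e τ)
          + (T : AdjoinRoot ((X : Polynomial ℤ) ^ n + 1)) ^ (τ : ℕ) * s ^ 2)) * h₂' τ)
        - (h₂ - ∑ τ : Fin (l + 1), (T : AdjoinRoot ((X : Polynomial ℤ) ^ n + 1)) ^ (τ : ℕ) * h₂' τ) * s ^ 2 := by
    simp only [sub_mul, add_mul, neg_mul, neg_add, Finset.sum_sub_distrib,
      Finset.sum_add_distrib, Finset.sum_neg_distrib, Finset.sum_mul, Finset.mul_sum]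
    ring_nf
    rw [show (∑ τ : Fin (l + 1), h₂' τ * e τ)
          = ∑ x : Fin (l + 1), e x * h₂' x from
        Finset.sum_congr rfl fun x _ => by ring]
  rw [key]
  exact dvd_sub (Finset.dvd_sum fun τ _ => (hb τ).mul_right _) (hh₂.mul_right _)
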